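/- Let g : ℝᵐ → ℝ ∪ {+∞} be convex and lower semicontinuous, let F : ℝⁿ → ℝᵐ have continuously differentiable components, let x̄ ∈ ℝⁿ satisfy F(x̄) ∈ int(dom g), let Δ̄ > 0, and let {F̃_Δ : Δ ∈ (0, Δ̄)} be fully linear models of F at x̄ with constants κ_F > 0 and κ_G > 0. Define f = g ∘ F and f̃_Δ = g ∘ F̃_Δ. Then there exist κ_f > 0 and Δ̄_f > 0 such that for every Δ ∈ (0, Δ̄_f) and every y in the open ball B_Δ(x̄), both f(y) and f̃_Δ(y) are finite and |f(y) − f̃_Δ(y)| ≤ κ_f Δ². -/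

import Mathlib

open Metric Set

/-- Package the components into a Euclidean-space point. -/
def vecOf {n m : ℕ} (F : Fin m → EuclideanSpace ℝ (Fin n) → ℝ)
    (y : EuclideanSpace ℝ (Fin n)) : EuclideanSpace ℝ (Fin m) := WithLp.toLp 2 (fun i => F i y)

/-- **Function value approximations** (Theorem 3.1). If `g` is convex lsc (epigraph convex and
closed), `F` has `C¹` components, `F x̄` lies in the interior of the domain of `g`, and
`F̃_Δ` are fully linear models of `F` at `x̄` with constants `κF, κG`, then setting
`f = g ∘ F` and `f̃_Δ = g ∘ F̃_Δ`, there exist `κf > 0` and `Δ̄_f > 0` such that for all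
`Δ ∈ (0, Δ̄_f)` and `y ∈ B_Δ(x̄)`, both values are finite and `|f(y) − f̃_Δ(y)| ≤ κf Δ²`. -/
theorem function_value_approximation {n m : ℕ}
    (g : EuclideanSpace ℝ (Fin m) → EReal)
    (hgbot : ∀ z, g z ≠ ⊥)
    (hconv : Convex ℝ {p : EuclideanSpace ℝ (Fin m) × ℝ | g p.1 ≤ (p.2 : EReal)})
    (hlsc : IsClosed {p : EuclideanSpace ℝ (Fin m) × ℝ | g p.1 ≤ (p.2 : EReal)})
    (F : Fin m → EuclideanSpace ℝ (Fin n) → ℝ)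
    (hF : ∀ i, ContDiff ℝ 1 (F i))
    (xbar : EuclideanSpace ℝ (Fin n))
    (hdom : (WithLp.toLp 2 (fun i => F i xbar) : EuclideanSpace ℝ (Fin m)) ∈ interior {z | g z < ⊤})
    (Δbar κF κG : ℝ) (hΔbar : 0 < Δbar) (hκF : 0 < κF) (hκG : 0 < κG)
    (Ft : ℝ → Fin m → EuclideanSpace ℝ (Fin n) → ℝ)
    (hFtC1 : ∀ Δ ∈ Ioo (0:ℝ) Δbar, ∀ i, ContDiff ℝ 1 (Ft Δ i))
    (hfl : ∀ Δ ∈ Ioo (0:ℝ) Δbar, ∀ i, ∀ y ∈ ball xbar Δ,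
      |F i y - Ft Δ i y| ≤ κF * Δ ^ 2 ∧
      ‖gradient (F i) y - gradient (Ft Δ i) y‖ ≤ κG * Δ) :
    ∃ κf > (0:ℝ), ∃ Δf > (0:ℝ), ∀ Δ ∈ Ioo (0:ℝ) Δf, ∀ y ∈ ball xbar Δ,
      g (WithLp.toLp 2 (fun i => F i y) : EuclideanSpace ℝ (Fin m)) ≠ ⊤ ∧
      g (WithLp.toLp 2 (fun i => Ft Δ i y) : EuclideanSpace ℝ (Fin m)) ≠ ⊤ ∧
      |(g (WithLp.toLp 2 (fun i => F i y) : EuclideanSpace ℝ (Fin m))).toReal -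
        (g (WithLp.toLp 2 (fun i => Ft Δ i y) : EuclideanSpace ℝ (Fin m))).toReal| ≤ κf * Δ ^ 2 := by
  classical
  set D : Set (EuclideanSpace ℝ (Fin m)) := {z | g z < ⊤} with hD
  set U : Set (EuclideanSpace ℝ (Fin m)) := interior D with hU
  have hUopen : IsOpen U := isOpen_interior
  set h : EuclideanSpace ℝ (Fin m) → ℝ := fun z => (g z).toReal with hh
  have hdom' : vecOf F xbar ∈ U := hdom
  -- epigraph membership for finite points
  have hepi : ∀ z, g z ≠ ⊤ →
      (z, h z) ∈ {p : EuclideanSpace ℝ (Fin m) × ℝ | g p.1 ≤ (p.2 : EReal)} := by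
    intro z hz
    simp only [mem_setOf_eq, hh]
    rw [EReal.coe_toReal hz (hgbot z)]
  have hDconv : Convex ℝ D := by
    intro z1 h1 z2 h2 a b ha hb hab
    have := hconv (hepi z1 h1.ne) (hepi z2 h2.ne) ha hb hab
    simp only [Prod.smul_mk, Prod.mk_add_mk, smul_eq_mul, mem_setOf_eq] at this
    exact lt_of_le_of_lt this (EReal.coe_lt_top _)
  have hUD : U ⊆ D := interior_subset
  have hconvOn : ConvexOn ℝ U h := by
    refine ⟨hDconv.interior, ?_⟩
    intro z1 hz1 z2 hz2 a b ha hb hab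
    have hmem := hconv (hepi z1 (hUD hz1).ne) (hepi z2 (hUD hz2).ne) ha hb hab
    simp only [Prod.smul_mk, Prod.mk_add_mk, smul_eq_mul, mem_setOf_eq] at hmem
    have := EReal.toReal_le_toReal hmem (hgbot _) (EReal.coe_ne_top _)
    rw [EReal.toReal_coe] at this
    simpa [hh, EReal.toReal_coe] using this
  -- local Lipschitz constant around the base point
  obtain ⟨K, t, ht, hlip⟩ := (hconvOn.locallyLipschitzOn hUopen) hdom'
  have htn : t ∈ nhds (vecOf F xbar) := by
    rwa [nhdsWithin_eq_nhds.2 (hUopen.mem_nhds hdom')] at ht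
  obtain ⟨ε, hε, hball⟩ := Metric.mem_nhds_iff.1 (Filter.inter_mem htn (hUopen.mem_nhds hdom'))
  -- continuity of vecOf F at xbar
  have hFc : Continuous (vecOf F) :=
    (PiLp.continuous_toLp 2 fun _ : Fin m => ℝ).comp
      (continuous_pi fun i => (hF i).continuous)
  obtain ⟨δ, hδ, hδc⟩ := Metric.continuousAt_iff.1 hFc.continuousAt (ε / 2) (by positivity)
  set C : ℝ := (Real.sqrt m + 1) * κF with hC
  have hCpos : 0 < C := by positivity
  set s : ℝ := Real.sqrt (ε / (2 * C)) with hs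
  have hspos : 0 < s := Real.sqrt_pos.2 (by positivity)
  refine ⟨((K : ℝ) + 1) * C, by positivity, min Δbar (min δ s), by positivity, ?_⟩
  rintro Δ ⟨hΔ0, hΔlt⟩ y hy
  have hΔbar' : Δ < Δbar := lt_of_lt_of_le hΔlt (min_le_left _ _)
  have hΔδ : Δ < δ := lt_of_lt_of_le hΔlt ((min_le_right _ _).trans (min_le_left _ _))
  have hΔs : Δ < s := lt_of_lt_of_le hΔlt ((min_le_right _ _).trans (min_le_right _ _))
  have hyx : dist y xbar < δ := lt_trans (mem_ball.1 hy) hΔδ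
  have hFy : dist (vecOf F y) (vecOf F xbar) < ε / 2 := hδc hyx
  -- distance between the two model values
  have hclose : dist (vecOf F y) (vecOf (Ft Δ) y) ≤ Real.sqrt m * (κF * Δ ^ 2) := by
    rw [EuclideanSpace.dist_eq]
    have hsum : ∑ i, dist (vecOf F y i) (vecOf (Ft Δ) y i) ^ 2
        ≤ (m : ℝ) * (κF * Δ ^ 2) ^ 2 := by
      calc ∑ i, dist (vecOf F y i) (vecOf (Ft Δ) y i) ^ 2
          ≤ ∑ _i : Fin m, (κF * Δ ^ 2) ^ 2 := by
            apply Finset.sum_le_sum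
            intro i _
            have := (hfl Δ ⟨hΔ0, hΔbar'⟩ i y hy).1
            show dist (F i y) (Ft Δ i y) ^ 2 ≤ _
            rw [Real.dist_eq]
            exact pow_le_pow_left₀ (abs_nonneg _) this 2
        _ = (m : ℝ) * (κF * Δ ^ 2) ^ 2 := by simp [mul_comm]
    calc Real.sqrt (∑ i, dist (vecOf F y i) (vecOf (Ft Δ) y i) ^ 2)
        ≤ Real.sqrt ((m : ℝ) * (κF * Δ ^ 2) ^ 2) := Real.sqrt_le_sqrt hsum
      _ = Real.sqrt m * (κF * Δ ^ 2) := by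
          rw [Real.sqrt_mul (by positivity), Real.sqrt_sq (by positivity)]
  have hsmall : Real.sqrt m * (κF * Δ ^ 2) ≤ ε / 2 := by
    have h1 : Real.sqrt m * (κF * Δ ^ 2) ≤ C * Δ ^ 2 := by
      rw [hC]
      nlinarith [Real.sqrt_nonneg (m : ℝ), sq_nonneg Δ]
    have h2 : C * Δ ^ 2 ≤ C * s ^ 2 :=
      mul_le_mul_of_nonneg_left (pow_le_pow_left₀ hΔ0.le hΔs.le 2) hCpos.le
    have h3 : s ^ 2 = ε / (2 * C) := Real.sq_sqrt (by positivity)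
    have h4 : C * s ^ 2 = ε / 2 := by
      rw [h3]
      field_simp
    linarith
  have hFty : dist (vecOf (Ft Δ) y) (vecOf F xbar) < ε := by
    calc dist (vecOf (Ft Δ) y) (vecOf F xbar)
        ≤ dist (vecOf (Ft Δ) y) (vecOf F y) + dist (vecOf F y) (vecOf F xbar) :=
          dist_triangle _ _ _
      _ < ε / 2 + ε / 2 := by
          apply add_lt_add_of_le_of_lt
          · rw [dist_comm]; exact hclose.trans hsmall
          · exact hFy
      _ = ε := by ring
  have hFymem : vecOf F y ∈ t ∩ U := hball (mem_ball.2 (by linarith [hFy]))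
  have hFtymem : vecOf (Ft Δ) y ∈ t ∩ U := hball (mem_ball.2 hFty)
  have hgF : g (vecOf F y) ≠ ⊤ := (hUD hFymem.2).ne
  have hgFt : g (vecOf (Ft Δ) y) ≠ ⊤ := (hUD hFtymem.2).ne
  refine ⟨hgF, hgFt, ?_⟩
  have hdle := hlip.dist_le_mul _ hFymem.1 _ hFtymem.1
  rw [Real.dist_eq] at hdle
  show |h (vecOf F y) - h (vecOf (Ft Δ) y)| ≤ _
  calc |h (vecOf F y) - h (vecOf (Ft Δ) y)|
      ≤ (K : ℝ) * dist (vecOf F y) (vecOf (Ft Δ) y) := hdle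
    _ ≤ (K : ℝ) * (Real.sqrt m * (κF * Δ ^ 2)) :=
        mul_le_mul_of_nonneg_left hclose K.coe_nonneg
    _ ≤ ((K : ℝ) + 1) * C * Δ ^ 2 := by
        rw [hC]
        have h0 : (K : ℝ) * (Real.sqrt m * κF) ≤ ((K : ℝ) + 1) * ((Real.sqrt m + 1) * κF) := by
          nlinarith [K.coe_nonneg, Real.sqrt_nonneg (m : ℝ), hκF.le]
        calc (K : ℝ) * (Real.sqrt m * (κF * Δ ^ 2))
            = ((K : ℝ) * (Real.sqrt m * κF)) * Δ ^ 2 := by ring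
          _ ≤ ((K : ℝ) + 1) * ((Real.sqrt m + 1) * κF) * Δ ^ 2 :=
              mul_le_mul_of_nonneg_right h0 (sq_nonneg Δ)
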